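/- Let M be a finite-dimensional Ŷ_{r,n}^K-module and fix an index i with 1 ≤ i ≤ n. If every eigenvalue of the action of X_i on M lies in the set I = {q^m : m ∈ ℤ}, then M is integral; that is, for every 1 ≤ k ≤ n, every eigenvalue of the action of X_k on M lies in I. -/

import Mathlib

/- Common setup: the affine Yokonuma-Hecke algebra presented by generators and
relations, reduced words, Bruhat order, affine Hecke algebras (of tensor-product
type), isotypic components and induced modules. -/

set_option maxHeartbeats 1000000

open scoped TensorProduct

noncomputable section

namespace YH

/-- Generators of the affine Yokonuma-Hecke algebra: `t j` for `j : Fin n`,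
`g i` (for `i` with `i+1 < n`, representing the transposition `(i, i+1)` in
0-based indexing), and `X1`, `X1inv` (the generator `X_1` and its inverse). -/
inductive YGen (n : ℕ) : Type
  | t (j : Fin n) : YGen n
  | g (i : ℕ) (h : i + 1 < n) : YGen n
  | X1 : YGen n
  | X1inv : YGen n

variable (K : Type) [Field K] (r n : ℕ) (q : K)

/-- The free algebra on the generators. -/
abbrev FY := FreeAlgebra K (YGen n)

def tF (j : Fin n) : FY K n := FreeAlgebra.ι K (YGen.t j)
def gF (i : ℕ) (h : i + 1 < n) : FY K n := FreeAlgebra.ι K (YGen.g i h)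
def X1F : FY K n := FreeAlgebra.ι K YGen.X1
def X1invF : FY K n := FreeAlgebra.ι K YGen.X1inv

/-- The idempotent `e_i = (1/r) ∑_{s=0}^{r-1} t_i^s t_{i+1}^{-s}` (as an element
of the free algebra, with `t_{i+1}^{-s}` written as `t_{i+1}^{(r-s) % r}`,
using `t^r = 1`). -/
def eF (i : ℕ) (h : i + 1 < n) : FY K n :=
  (r : K)⁻¹ • ∑ s ∈ Finset.range r,
    tF K n ⟨i, by omega⟩ ^ s * tF K n ⟨i + 1, h⟩ ^ ((r - s) % r)

/-- The simple transposition `s_i = (i, i+1)` of `Fin n` (0-based). -/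
def swapi (i : ℕ) (h : i + 1 < n) : Equiv.Perm (Fin n) :=
  Equiv.swap ⟨i, by omega⟩ ⟨i + 1, h⟩

/-- Defining relations of the affine Yokonuma-Hecke algebra `Ŷ_{r,n}(q)` over `K`. -/
inductive YRel : FY K n → FY K n → Prop
  | gg {i j : ℕ} (hi : i + 1 < n) (hj : j + 1 < n) (hij : i + 2 ≤ j ∨ j + 2 ≤ i) :
      YRel (gF K n i hi * gF K n j hj) (gF K n j hj * gF K n i hi)
  | braid {i : ℕ} (h : i + 2 < n) :
      YRel (gF K n i (by omega) * gF K n (i + 1) h * gF K n i (by omega))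
        (gF K n (i + 1) h * gF K n i (by omega) * gF K n (i + 1) h)
  | tt (i j : Fin n) : YRel (tF K n i * tF K n j) (tF K n j * tF K n i)
  | gt {i : ℕ} (hi : i + 1 < n) (j : Fin n) :
      YRel (gF K n i hi * tF K n j) (tF K n (swapi n i hi j) * gF K n i hi)
  | tr (j : Fin n) : YRel (tF K n j ^ r) 1
  | gsq {i : ℕ} (hi : i + 1 < n) :
      YRel (gF K n i hi * gF K n i hi)
        (1 + (q - q⁻¹) • (eF K r n i hi * gF K n i hi))
  | XXinv : YRel (X1F K n * X1invF K n) 1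
  | XinvX : YRel (X1invF K n * X1F K n) 1
  | gXgX (h : 1 < n) :
      YRel (gF K n 0 (by omega) * X1F K n * gF K n 0 (by omega) * X1F K n)
        (X1F K n * gF K n 0 (by omega) * X1F K n * gF K n 0 (by omega))
  | gX {i : ℕ} (hi : i + 1 < n) (h1 : 1 ≤ i) :
      YRel (gF K n i hi * X1F K n) (X1F K n * gF K n i hi)
  | tX (j : Fin n) : YRel (tF K n j * X1F K n) (X1F K n * tF K n j)

/-- The affine Yokonuma-Hecke algebra `Ŷ_{r,n}^K`. -/
abbrev Y := RingQuot (YRel K r n q)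

def mkY : FY K n →ₐ[K] Y K r n q := RingQuot.mkAlgHom K (YRel K r n q)

/-- The generator `t_j` (0-based `j`). -/
def t (j : Fin n) : Y K r n q := mkY K r n q (tF K n j)
/-- The generator `g_i` (0-based `i`, `i+1 < n`). -/
def g (i : ℕ) (h : i + 1 < n) : Y K r n q := mkY K r n q (gF K n i h)
/-- The idempotent `e_i`. -/
def e (i : ℕ) (h : i + 1 < n) : Y K r n q := mkY K r n q (eF K r n i h)
def X1 : Y K r n q := mkY K r n q (X1F K n)
def X1inv : Y K r n q := mkY K r n q (X1invF K n)

/-- `X_{i+1} := g_i X_i g_i`, recursively. -/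
def Xrec : (k : ℕ) → k < n → Y K r n q
  | 0, _ => X1 K r n q
  | k + 1, h => g K r n q k (by omega) * Xrec k (by omega) * g K r n q k (by omega)

/-- The commuting elements `X_j` (0-based `j`). -/
def X (j : Fin n) : Y K r n q := Xrec K r n q j.1 j.2

/-! ### Words and reduced expressions -/

/-- A word in the simple transpositions. -/
abbrev Word := List {i : ℕ // i + 1 < n}

/-- The permutation represented by a word. -/
def permOfWord (l : Word n) : Equiv.Perm (Fin n) :=
  (l.map fun i => swapi n i.1 i.2).prod

/-- `l` is a reduced word for `w`. -/
def IsReducedWord (l : Word n) (w : Equiv.Perm (Fin n)) : Prop :=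
  permOfWord n l = w ∧ ∀ l' : Word n, permOfWord n l' = w → l.length ≤ l'.length

/-- The product `g_{i_1} ⋯ g_{i_k}` along a word. -/
def gword (l : Word n) : Y K r n q := (l.map fun i => g K r n q i.1 i.2).prod

/-- `gw` is the family `w ↦ g_w`, i.e. `g_w` is the product of the `g_i` along
any reduced expression of `w` (well defined by Matsumoto's lemma). -/
def GwSpec (gw : Equiv.Perm (Fin n) → Y K r n q) : Prop :=
  ∀ (w : Equiv.Perm (Fin n)) (l : Word n), IsReducedWord n l w → gw w = gword K r n q l

/-- Bruhat order: `u ≤ w` iff some reduced word of `w` has a subword which is a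
reduced word of `u`. -/
def BruhatLE (u w : Equiv.Perm (Fin n)) : Prop :=
  ∃ l : Word n, IsReducedWord n l w ∧ ∃ l' : Word n, l'.Sublist l ∧ IsReducedWord n l' u

def BruhatLT (u w : Equiv.Perm (Fin n)) : Prop := BruhatLE n u w ∧ u ≠ w

/-! ### Monomials and distinguished subalgebras -/

/-- `XU` is a family of units lifting the commuting elements `X_j` (each `X_j`
is invertible in `Ŷ_{r,n}^K`). -/
def XUSpec (XU : Fin n → (Y K r n q)ˣ) : Prop :=
  ∀ j, (XU j : Y K r n q) = X K r n q j

/-- The monomial `X^α = X_1^{α_1} ⋯ X_n^{α_n}`, `α ∈ ℤ^n`. -/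
def Xpow (XU : Fin n → (Y K r n q)ˣ) (α : Fin n → ℤ) : Y K r n q :=
  ((List.finRange n).map fun j => ((XU j ^ α j : (Y K r n q)ˣ) : Y K r n q)).prod

/-- The monomial `t^β = t_1^{β_1} ⋯ t_n^{β_n}`, `β ∈ (ℤ/rℤ)^n`. -/
def tpow (β : Fin n → ZMod r) : Y K r n q :=
  ((List.finRange n).map fun j => t K r n q j ^ (β j).val).prod

/-- The subalgebra `KT` generated by `t_1, …, t_n` (the group algebra of
`T = (ℤ/rℤ)^n`). -/
def KT : Subalgebra K (Y K r n q) := Algebra.adjoin K (Set.range (t K r n q))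

/-- The Laurent polynomial subalgebra `P_n^K` generated by `X_1^{±1}, …, X_n^{±1}`. -/
def Pn (XU : Fin n → (Y K r n q)ˣ) : Subalgebra K (Y K r n q) :=
  Algebra.adjoin K
    ((Set.range fun j => ((XU j : (Y K r n q)ˣ) : Y K r n q)) ∪
      (Set.range fun j => (((XU j)⁻¹ : (Y K r n q)ˣ) : Y K r n q)))

/-- The subalgebra `P_n^K(T)` generated by `t_1, …, t_n` and `X_1^{±1}, …, X_n^{±1}`. -/
def PT (XU : Fin n → (Y K r n q)ˣ) : Subalgebra K (Y K r n q) :=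
  Algebra.adjoin K
    (Set.range (t K r n q) ∪
      (Set.range fun j => ((XU j : (Y K r n q)ˣ) : Y K r n q)) ∪
      (Set.range fun j => (((XU j)⁻¹ : (Y K r n q)ˣ) : Y K r n q)))

/-- The subalgebra of `Ŷ_{r,n}^K` generated by all `t_j`, all `X_j^{±1}`, and the
`g_w` for `w` in a set `W` of permutations (e.g. a Young subgroup). -/
def Ysub (XU : Fin n → (Y K r n q)ˣ) (gw : Equiv.Perm (Fin n) → Y K r n q)
    (W : Set (Equiv.Perm (Fin n))) : Subalgebra K (Y K r n q) :=
  Algebra.adjoin K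
    (Set.range (t K r n q) ∪
      (Set.range fun j => ((XU j : (Y K r n q)ˣ) : Y K r n q)) ∪
      (Set.range fun j => (((XU j)⁻¹ : (Y K r n q)ˣ) : Y K r n q)) ∪
      (gw '' W))

/-- The Young subgroup `S_μ` attached to a block function `c : Fin n → Fin r`
(for monotone `c`, this is the Young subgroup of the composition `μ` whose
parts are the fiber sizes of `c`): permutations preserving the blocks. -/
def Smu (c : Fin n → Fin r) : Set (Equiv.Perm (Fin n)) :=
  {w : Equiv.Perm (Fin n) | ∀ j, c (w j) = c j}

/-- Permutations fixing all positions `≥ m` (the subgroup `S_m ⊆ S_n`). -/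
def SFix (m : ℕ) : Set (Equiv.Perm (Fin n)) :=
  {w : Equiv.Perm (Fin n) | ∀ j : Fin n, m ≤ j.1 → w j = j}

/-! ### Isotypic components -/

section Modules

variable (M : Type) [AddCommGroup M] [Module K M] [Module (Y K r n q) M]
  [IsScalarTower K (Y K r n q) M]

/-- The `V(μ)`-isotypic component of `M` as a `KT`-module: since `V(μ)` is the
one-dimensional `KT`-module on which `t_j` acts by the scalar `ζ^{c j}`, this is
the simultaneous eigenspace. Here `ζ` is a primitive `r`-th root of unity and
the simple `K(ℤ/rℤ)`-modules are `V_k : t ↦ ζ^{k}`, `k : Fin r`. -/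
def Imu (ζ : K) (c : Fin n → Fin r) : Submodule K M where
  carrier := {m : M | ∀ j : Fin n, t K r n q j • m = ζ ^ ((c j : ℕ)) • m}
  add_mem' := by
    intro a b ha hb
    intro j
    rw [smul_add, ha j, hb j, smul_add]
  zero_mem' := by intro j; simp
  smul_mem' := by
    intro k m hm
    intro j
    rw [smul_comm, hm j, smul_comm]

/-- `M_μ := ∑_{w ∈ S_n} g_w (I_μ M)`. -/
def Mmu (ζ : K) (c : Fin n → Fin r) (gw : Equiv.Perm (Fin n) → Y K r n q) :
    Submodule K M :=
  Submodule.span K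
    {x : M | ∃ w : Equiv.Perm (Fin n), ∃ m ∈ Imu K r n q M ζ c, x = gw w • m}

end Modules

/-! ### Affine Hecke algebras of type A (tensor-product form)

`HH K q n r c` is the tensor product `Ĥ_{μ_1}^K ⊗ ⋯ ⊗ Ĥ_{μ_r}^K` of affine Hecke
algebras, presented globally: generators `T_i` for those adjacencies `i, i+1`
lying in a common block of `c : Fin n → Fin r`, and invertible `Y_j` for all
`j`.  (For `r = 1` and `c` constant this is the affine Hecke algebra `Ĥ_n^K`.) -/

inductive HGen (n r : ℕ) (c : Fin n → Fin r) : Type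
  | T (i : ℕ) (h : i + 1 < n) (hc : c ⟨i, by omega⟩ = c ⟨i + 1, h⟩) : HGen n r c
  | Y (j : Fin n) : HGen n r c
  | Yinv (j : Fin n) : HGen n r c

end YH

namespace YH

variable (K : Type) [Field K] (q : K) {n r : ℕ}

abbrev FH (c : Fin n → Fin r) := FreeAlgebra K (HGen n r c)

def TFh (c : Fin n → Fin r) (i : ℕ) (h : i + 1 < n)
    (hc : c ⟨i, by omega⟩ = c ⟨i + 1, h⟩) : FH K c :=
  FreeAlgebra.ι K (HGen.T i h hc)
def YFh (c : Fin n → Fin r) (j : Fin n) : FH K c := FreeAlgebra.ι K (HGen.Y j)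
def YinvFh (c : Fin n → Fin r) (j : Fin n) : FH K c := FreeAlgebra.ι K (HGen.Yinv j)

/-- Defining relations of the (tensor product of) affine Hecke algebra(s). -/
inductive HRel (c : Fin n → Fin r) : FH K c → FH K c → Prop
  | quad {i : ℕ} (h : i + 1 < n) (hc : c ⟨i, by omega⟩ = c ⟨i + 1, h⟩) :
      HRel c ((TFh K c i h hc - algebraMap K (FH K c) q) *
          (TFh K c i h hc + algebraMap K (FH K c) q⁻¹)) 0
  | braid {i : ℕ} (h : i + 2 < n)
      (hc1 : c ⟨i, by omega⟩ = c ⟨i + 1, by omega⟩)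
      (hc2 : c ⟨i + 1, by omega⟩ = c ⟨i + 2, h⟩) :
      HRel c
        (TFh K c i (by omega) hc1 * TFh K c (i + 1) (by omega) hc2 *
          TFh K c i (by omega) hc1)
        (TFh K c (i + 1) (by omega) hc2 * TFh K c i (by omega) hc1 *
          TFh K c (i + 1) (by omega) hc2)
  | TT {i j : ℕ} (hi : i + 1 < n) (hci : c ⟨i, by omega⟩ = c ⟨i + 1, hi⟩)
      (hj : j + 1 < n) (hcj : c ⟨j, by omega⟩ = c ⟨j + 1, hj⟩)
      (hij : i + 2 ≤ j ∨ j + 2 ≤ i) :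
      HRel c (TFh K c i hi hci * TFh K c j hj hcj)
        (TFh K c j hj hcj * TFh K c i hi hci)
  | YY (j k : Fin n) : HRel c (YFh K c j * YFh K c k) (YFh K c k * YFh K c j)
  | YYinv (j : Fin n) : HRel c (YFh K c j * YinvFh K c j) 1
  | YinvY (j : Fin n) : HRel c (YinvFh K c j * YFh K c j) 1
  | TYT {i : ℕ} (h : i + 1 < n) (hc : c ⟨i, by omega⟩ = c ⟨i + 1, h⟩) :
      HRel c (TFh K c i h hc * YFh K c ⟨i, by omega⟩ * TFh K c i h hc)
        (YFh K c ⟨i + 1, h⟩)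
  | TY {i : ℕ} (h : i + 1 < n) (hc : c ⟨i, by omega⟩ = c ⟨i + 1, h⟩)
      (j : Fin n) (hj1 : j.1 ≠ i) (hj2 : j.1 ≠ i + 1) :
      HRel c (TFh K c i h hc * YFh K c j) (YFh K c j * TFh K c i h hc)

/-- The algebra `Ĥ_{μ_1}^K ⊗ ⋯ ⊗ Ĥ_{μ_r}^K` (for `c` monotone with fiber sizes
`μ_k`); for `r = 1` it is the affine Hecke algebra `Ĥ_n^K` of type `A`. -/
abbrev HH (c : Fin n → Fin r) := RingQuot (HRel K q c)

def mkH (c : Fin n → Fin r) : FH K c →ₐ[K] HH K q c := RingQuot.mkAlgHom K (HRel K q c)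

/-- The generator `T_i` (for an adjacency internal to a block of `c`). -/
def Tg (c : Fin n → Fin r) (i : ℕ) (h : i + 1 < n)
    (hc : c ⟨i, by omega⟩ = c ⟨i + 1, h⟩) : HH K q c :=
  mkH K q c (TFh K c i h hc)
/-- The generator `Y_j`. -/
def Yg (c : Fin n → Fin r) (j : Fin n) : HH K q c := mkH K q c (YFh K c j)
/-- The generator `Y_j^{-1}`. -/
def Yinvg (c : Fin n → Fin r) (j : Fin n) : HH K q c := mkH K q c (YinvFh K c j)

end YH

namespace YH

variable (K : Type) [Field K] (r n : ℕ) (q : K)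

/-! ### Actions and induced modules -/

/-- The action of an algebra `R` on a module `M` as an algebra homomorphism
`R →ₐ[K] End_K(M)`. -/
def actHom (R : Type) [Ring R] [Algebra K R] (M : Type) [AddCommGroup M] [Module K M]
    [Module R M] [IsScalarTower K R M] : R →ₐ[K] Module.End K M where
  toFun a :=
    { toFun := fun m => a • m
      map_add' := fun x y => smul_add a x y
      map_smul' := fun k m => (smul_comm k a m).symm }
  map_one' := by ext m; exact one_smul R m
  map_mul' a b := by ext m; exact mul_smul a b m
  map_zero' := by ext m; exact zero_smul R m
  map_add' a b := by ext m; exact add_smul a b m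
  commutes' k := by
    ext m
    simp [Module.algebraMap_end_apply, algebraMap_smul]

/-- A `K`-space `P` with action `ρ` of an algebra `R` is "simple" if it is
nonzero and has no proper nonzero `ρ`-stable subspace. -/
def SimpleVia {R : Type} [Ring R] [Algebra K R] {P : Type} [AddCommGroup P] [Module K P]
    (ρ : R →ₐ[K] Module.End K P) : Prop :=
  Nontrivial P ∧
    ∀ Q : Submodule K P, (∀ h : R, ∀ v ∈ Q, ρ h v ∈ Q) → Q = ⊥ ∨ Q = ⊤

/-- The relation submodule defining the induced module
`Ŷ_{r,n}^K ⊗_{Ŷ_{r,μ}^K} (V(μ) ⊗ P)`, where `P` is a module over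
`Ĥ_{μ_1}^K ⊗ ⋯ ⊗ Ĥ_{μ_r}^K` (given by `ρ`), and `V(μ)` is the one-dimensional
`KT`-module attached to `c` (and a primitive `r`-th root of unity `ζ`):
we quotient `Ŷ_{r,n}^K ⊗_K P` by the `Ŷ`-span of the relations
`t_j ⊗ p = ζ^{c j} (1 ⊗ p)`, `g_i ⊗ p = 1 ⊗ T_i p` (`i` internal), and
`X_j ⊗ p = 1 ⊗ Y_j p`. -/
def IndRel (ζ : K) (c : Fin n → Fin r) (P : Type) [AddCommGroup P] [Module K P]
    (ρ : HH K q c →ₐ[K] Module.End K P) :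
    Submodule (Y K r n q) (Y K r n q ⊗[K] P) :=
  Submodule.span (Y K r n q)
    ({z : Y K r n q ⊗[K] P | ∃ (j : Fin n) (p : P),
        z = t K r n q j ⊗ₜ[K] p - (1 : Y K r n q) ⊗ₜ[K] (ζ ^ ((c j : ℕ)) • p)} ∪
      {z | ∃ (i : ℕ) (hi : i + 1 < n) (hc : c ⟨i, by omega⟩ = c ⟨i + 1, hi⟩) (p : P),
        z = g K r n q i hi ⊗ₜ[K] p - (1 : Y K r n q) ⊗ₜ[K] (ρ (Tg K q c i hi hc) p)} ∪
      {z | ∃ (j : Fin n) (p : P),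
        z = X K r n q j ⊗ₜ[K] p - (1 : Y K r n q) ⊗ₜ[K] (ρ (Yg K q c j) p)})

/-- The induced `Ŷ_{r,n}^K`-module `S_μ(L.) = Ŷ_{r,n}^K ⊗_{Ŷ_{r,μ}^K} (V(μ) ⊗ P)`. -/
def Ind (ζ : K) (c : Fin n → Fin r) (P : Type) [AddCommGroup P] [Module K P]
    (ρ : HH K q c →ₐ[K] Module.End K P) : Type :=
  @HasQuotient.Quotient (Y K r n q ⊗[K] P) _ Submodule.hasQuotient (IndRel K r n q ζ c P ρ)

instance (ζ : K) (c : Fin n → Fin r) (P : Type) [AddCommGroup P] [Module K P]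
    (ρ : HH K q c →ₐ[K] Module.End K P) : AddCommGroup (Ind K r n q ζ c P ρ) :=
  inferInstanceAs (AddCommGroup (@HasQuotient.Quotient (Y K r n q ⊗[K] P) _ Submodule.hasQuotient (IndRel K r n q ζ c P ρ)))

instance (ζ : K) (c : Fin n → Fin r) (P : Type) [AddCommGroup P] [Module K P]
    (ρ : HH K q c →ₐ[K] Module.End K P) : Module (Y K r n q) (Ind K r n q ζ c P ρ) :=
  inferInstanceAs (Module (Y K r n q) (@HasQuotient.Quotient (Y K r n q ⊗[K] P) _ Submodule.hasQuotient (IndRel K r n q ζ c P ρ)))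

/-- The map skipping position `p`: `j ↦ j` if `j < p`, else `j ↦ j+1`
(the order embedding `Fin (n-1) → Fin n` avoiding `p`). -/
def skipIns (p : ℕ) (j : Fin (n - 1)) : Fin n :=
  if j.1 < p then ⟨j.1, by have := j.2; omega⟩ else ⟨j.1 + 1, by have := j.2; omega⟩

end YH

open Module in

lemma keyStep {K M : Type} [Field K] [IsAlgClosed K] [AddCommGroup M] [Module K M]
    [FiniteDimensional K M] (q : K) (hq : q ≠ 0) (A B E G : Module.End K M)
    (hAB : A * B = B * A) (hEA : E * A = A * E) (hEB : E * B = B * E) (hEG : E * G = G * E)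
    (hGAG : G * A * G = B) (hG2 : G * G = 1 + (q - q⁻¹) • (E * G)) (hE2 : E * E = E)
    (a : K) (ha : Module.End.HasEigenvalue B a) :
    ∃ b : K, Module.End.HasEigenvalue A b ∧ ∃ m : ℤ, a = b * q ^ m := by
  have hqq : q * q⁻¹ = 1 := mul_inv_cancel₀ hq
  set V1 : Submodule K M := Module.End.eigenspace B a with hV1
  have hV1ne : V1 ≠ ⊥ := ha
  have hinvE : ∀ x ∈ V1, E x ∈ V1 := by
    intro x hx
    rw [hV1, Module.End.mem_eigenspace_iff] at hx ⊢
    have h1 : B (E x) = E (B x) := by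
      rw [← Module.End.mul_apply, ← Module.End.mul_apply, hEB]
    rw [h1, hx, map_smul]
  haveI : Nontrivial V1 := Submodule.nontrivial_iff_ne_bot.mpr hV1ne
  obtain ⟨ε, hε⟩ := Module.End.exists_eigenvalue (E.restrict hinvE)
  obtain ⟨v1, hv1⟩ := hε.exists_hasEigenvector
  have hv1E : E (v1 : M) = ε • (v1 : M) := by
    have := congrArg (Subtype.val) hv1.apply_eq_smul
    simpa [LinearMap.restrict_apply] using this
  set V2 : Submodule K M := V1 ⊓ Module.End.eigenspace E ε with hV2
  have hv1mem : (v1 : M) ∈ V2 := ⟨v1.2, Module.End.mem_eigenspace_iff.mpr hv1E⟩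
  have hV2ne : V2 ≠ ⊥ := by
    rw [Submodule.ne_bot_iff]
    refine ⟨v1, hv1mem, ?_⟩
    intro h0
    exact hv1.2 (Subtype.coe_injective (by simpa using h0))
  have hinvA : ∀ x ∈ V2, A x ∈ V2 := by
    intro x hx
    rw [hV2, Submodule.mem_inf] at hx ⊢
    obtain ⟨hx1, hx2⟩ := hx
    rw [Module.End.mem_eigenspace_iff] at hx2
    rw [hV1, Module.End.mem_eigenspace_iff] at hx1
    constructor
    · rw [hV1, Module.End.mem_eigenspace_iff]
      have h1 : B (A x) = A (B x) := by
        rw [← Module.End.mul_apply, ← Module.End.mul_apply, hAB]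
      rw [h1, hx1, map_smul]
    · rw [Module.End.mem_eigenspace_iff]
      have h1 : E (A x) = A (E x) := by
        rw [← Module.End.mul_apply, ← Module.End.mul_apply, hEA]
      rw [h1, hx2, map_smul]
  haveI : Nontrivial V2 := Submodule.nontrivial_iff_ne_bot.mpr hV2ne
  obtain ⟨b, hb⟩ := Module.End.exists_eigenvalue (A.restrict hinvA)
  obtain ⟨w0, hw0⟩ := hb.exists_hasEigenvector
  set v : M := (w0 : M) with hvdef
  have hvne : v ≠ 0 := by
    intro h0
    exact hw0.2 (Subtype.coe_injective (by simpa [hvdef] using h0))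
  have hAv : A v = b • v := by
    have := congrArg (Subtype.val) hw0.apply_eq_smul
    simpa [LinearMap.restrict_apply] using this
  have hw0mem := Submodule.mem_inf.mp (show (w0 : M) ∈ V1 ⊓ Module.End.eigenspace E ε from w0.2)
  have hBv : B v = a • v := Module.End.mem_eigenspace_iff.mp hw0mem.1
  have hEv : E v = ε • v := Module.End.mem_eigenspace_iff.mp hw0mem.2
  have hbEig : Module.End.HasEigenvalue A b :=
    Module.End.hasEigenvalue_of_hasEigenvector
      ⟨Module.End.mem_eigenspace_iff.mpr hAv, hvne⟩
  have hε01 : ε = 0 ∨ ε = 1 := by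
    have h1 : (E * E) v = E v := by rw [hE2]
    rw [Module.End.mul_apply, hEv, map_smul, hEv, smul_smul] at h1
    have h2 : (ε * ε - ε) • v = 0 := by rw [sub_smul, h1, sub_self]
    have h3 : ε * ε - ε = 0 := by
      rcases smul_eq_zero.mp h2 with h | h
      · exact h
      · exact absurd h hvne
    have h4 : (ε - 0) * (ε - 1) = 0 := by linear_combination h3
    rcases mul_eq_zero.mp h4 with h | h
    · exact Or.inl (by linear_combination h)
    · exact Or.inr (by linear_combination h)
  have hGinv : (G - (q - q⁻¹) • E) * G = 1 := by
    rw [sub_mul, smul_mul_assoc, hG2, hEG, add_sub_cancel_right]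
  have hAG : A * G = (G - (q - q⁻¹) • E) * B := by
    rw [← hGAG, ← mul_assoc, ← mul_assoc, hGinv, one_mul]
  set u : M := G v with hudef
  have hune : u ≠ 0 := by
    intro h0
    have h1 : ((G - (q - q⁻¹) • E) * G) v = v := by rw [hGinv]; simp
    rw [Module.End.mul_apply, ← hudef, h0, map_zero] at h1
    exact hvne h1.symm
  have hAu : A u = a • u - ((q - q⁻¹) * a * ε) • v := by
    have h1 : A u = ((G - (q - q⁻¹) • E) * B) v := by
      rw [← hAG, Module.End.mul_apply]
    rw [h1, Module.End.mul_apply, hBv, map_smul, LinearMap.sub_apply,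
      LinearMap.smul_apply, hEv, ← hudef]
    module
  by_cases hcex : ∃ c : K, u = c • v
  · obtain ⟨c, huc⟩ := hcex
    have hcne : c ≠ 0 := by
      rintro rfl
      rw [zero_smul] at huc
      exact hune huc
    have hGG : (G * G) v = (c * c) • v := by
      rw [Module.End.mul_apply, ← hudef, huc, map_smul, ← hudef, huc, smul_smul]
    have hGG2 : (G * G) v = v + ((q - q⁻¹) * ε * c) • v := by
      rw [hG2]
      have h5 : (1 + (q - q⁻¹) • (E * G)) v = v + (q - q⁻¹) • (E u) := by
        simp [Module.End.mul_apply, hudef]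
      rw [h5, huc, map_smul, hEv]
      module
    have hc2 : c * c = 1 + (q - q⁻¹) * ε * c := by
      have h2 : (c * c - (1 + (q - q⁻¹) * ε * c)) • v = 0 := by
        rw [sub_smul, ← hGG, hGG2, add_smul, one_smul, sub_self]
      rcases smul_eq_zero.mp h2 with h | h
      · linear_combination h
      · exact absurd h hvne
    have hcb : c * b = a * c - (q - q⁻¹) * a * ε := by
      have h1 : A u = (c * b) • v := by rw [huc, map_smul, hAv, smul_smul]
      have h2 : A u = (a * c - (q - q⁻¹) * a * ε) • v := by
        rw [hAu, huc, smul_smul, ← sub_smul]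
      have h3 : (c * b - (a * c - (q - q⁻¹) * a * ε)) • v = 0 := by
        rw [sub_smul, ← h1, h2, sub_self]
      rcases smul_eq_zero.mp h3 with h | h
      · linear_combination h
      · exact absurd h hvne
    rcases hε01 with hε0 | hε1
    · refine ⟨b, hbEig, 0, ?_⟩
      rw [hε0] at hcb
      have hba : c * b = c * a := by linear_combination hcb
      have : b = a := mul_left_cancel₀ hcne hba
      rw [zpow_zero, mul_one, this]
    · rw [hε1, mul_one] at hcb hc2
      have hfac : (c - q) * (c + q⁻¹) = 0 := by
        linear_combination hc2 - hqq
      rcases mul_eq_zero.mp hfac with h | h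
      · have hcq : c = q := by linear_combination h
        refine ⟨b, hbEig, 2, ?_⟩
        rw [hcq] at hcb
        have h2 : q ^ (2 : ℤ) = q * q := by
          rw [show (2 : ℤ) = (2 : ℕ) by rfl, zpow_natCast]; ring
        rw [h2]
        linear_combination (-q) * hcb - a * hqq
      · have hcq : c = -q⁻¹ := by linear_combination h
        refine ⟨b, hbEig, -2, ?_⟩
        rw [hcq] at hcb
        have h2 : q ^ (-2 : ℤ) = q⁻¹ * q⁻¹ := by
          rw [zpow_neg, show (2 : ℤ) = (2 : ℕ) by rfl, zpow_natCast, pow_two, mul_inv]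
        rw [h2]
        linear_combination q⁻¹ * hcb - a * hqq
  · push_neg at hcex
    by_cases hab : a = b
    · exact ⟨b, hbEig, 0, by simp [hab]⟩
    · set s : K := (q - q⁻¹) * a * ε / (b - a) with hs
      set w : M := u + s • v with hw
      have hwne : w ≠ 0 := by
        intro h0
        apply hcex (-s)
        rw [hw] at h0
        have h1 : u = -(s • v) := by rw [eq_neg_iff_add_eq_zero]; exact h0
        rw [h1, neg_smul]
      have hba : b - a ≠ 0 := sub_ne_zero.mpr (Ne.symm hab)
      have hsba : s * (b - a) = (q - q⁻¹) * a * ε := div_mul_cancel₀ _ hba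
      have hAw : A w = a • w := by
        rw [hw, map_add, map_smul, hAu, hAv]
        match_scalars
        · ring
        · linear_combination hsba
      exact ⟨a, Module.End.hasEigenvalue_of_hasEigenvector
        ⟨Module.End.mem_eigenspace_iff.mpr hAw, hwne⟩, 0, by simp⟩

namespace YH
section Identities
variable {K : Type} [Field K] {r n : ℕ} {q : K}

private lemma Yrel {x y : FY K n} (h : YRel K r n q x y) :
    mkY K r n q x = mkY K r n q y :=
  RingQuot.mkAlgHom_rel _ h

lemma g_t_rel (i : ℕ) (hi : i + 1 < n) (j : Fin n) :
    g K r n q i hi * t K r n q j = t K r n q (swapi n i hi j) * g K r n q i hi := by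
  simpa [g, t, mkY, gF, tF, map_mul] using Yrel (YRel.gt (q := q) (r := r) hi j)

lemma swapi_swapi (i : ℕ) (hi : i + 1 < n) (j : Fin n) :
    swapi n i hi (swapi n i hi j) = j := Equiv.swap_apply_self _ _ _

lemma t_g_rel (i : ℕ) (hi : i + 1 < n) (j : Fin n) :
    t K r n q j * g K r n q i hi = g K r n q i hi * t K r n q (swapi n i hi j) := by
  have := g_t_rel (q := q) (r := r) i hi (swapi n i hi j)
  rw [swapi_swapi] at this
  exact this.symm

lemma t_t_rel (i j : Fin n) :
    t K r n q i * t K r n q j = t K r n q j * t K r n q i := by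
  simpa [t, mkY, tF, map_mul] using Yrel (YRel.tt (q := q) (r := r) i j)

lemma t_pow_r (j : Fin n) : t K r n q j ^ r = 1 := by
  simpa [t, mkY, tF, map_pow] using Yrel (YRel.tr (q := q) j)

lemma g_sq (i : ℕ) (hi : i + 1 < n) :
    g K r n q i hi * g K r n q i hi
      = 1 + (q - q⁻¹) • (e K r n q i hi * g K r n q i hi) := by
  simpa [g, e, mkY, gF, map_mul, map_add, map_one, map_smul] using
    Yrel (YRel.gsq (q := q) (r := r) hi)

lemma gXgX_rel (h : 1 < n) :
    g K r n q 0 (by omega) * X1 K r n q * g K r n q 0 (by omega) * X1 K r n q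
      = X1 K r n q * g K r n q 0 (by omega) * X1 K r n q * g K r n q 0 (by omega) := by
  simpa [g, X1, mkY, gF, X1F, map_mul] using Yrel (YRel.gXgX (q := q) (r := r) h)

lemma g_X1_rel (i : ℕ) (hi : i + 1 < n) (h1 : 1 ≤ i) :
    g K r n q i hi * X1 K r n q = X1 K r n q * g K r n q i hi := by
  simpa [g, X1, mkY, gF, X1F, map_mul] using Yrel (YRel.gX (q := q) (r := r) hi h1)

lemma t_X1_rel (j : Fin n) :
    t K r n q j * X1 K r n q = X1 K r n q * t K r n q j := by
  simpa [t, X1, mkY, tF, X1F, map_mul] using Yrel (YRel.tX (q := q) (r := r) j)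

lemma gg_rel {i j : ℕ} (hi : i + 1 < n) (hj : j + 1 < n) (hij : i + 2 ≤ j ∨ j + 2 ≤ i) :
    g K r n q i hi * g K r n q j hj = g K r n q j hj * g K r n q i hi := by
  simpa [g, mkY, gF, map_mul] using Yrel (YRel.gg (q := q) (r := r) hi hj hij)

lemma braid_rel {i : ℕ} (h : i + 2 < n) :
    g K r n q i (by omega) * g K r n q (i + 1) h * g K r n q i (by omega)
      = g K r n q (i + 1) h * g K r n q i (by omega) * g K r n q (i + 1) h := by
  simpa [g, mkY, gF, map_mul] using Yrel (YRel.braid (q := q) (r := r) h)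

/-- `t j` commutes with all `Xrec m`. -/
lemma t_Xrec_comm : ∀ (m : ℕ) (hm : m < n) (j : Fin n),
    Commute (t K r n q j) (Xrec K r n q m hm) := by
  intro m
  induction m with
  | zero =>
    intro hm j
    exact (t_X1_rel j)
  | succ m ih =>
    intro hm j
    show Commute (t K r n q j)
      (g K r n q m (by omega) * Xrec K r n q m (by omega) * g K r n q m (by omega))
    have S1 : SemiconjBy (g K r n q m (by omega)) (t K r n q (swapi n m (by omega) j))
        (t K r n q j) := by
      have := g_t_rel (q := q) (r := r) m (by omega : m + 1 < n) (swapi n m (by omega) j)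
      rw [swapi_swapi] at this
      exact this
    have S2 : SemiconjBy (Xrec K r n q m (by omega)) (t K r n q (swapi n m (by omega) j))
        (t K r n q (swapi n m (by omega) j)) := ((ih (by omega) _).symm : _)
    have S3 : SemiconjBy (g K r n q m (by omega)) (t K r n q j)
        (t K r n q (swapi n m (by omega) j)) := g_t_rel m (by omega) j
    have h2 := S1.mul_left (S2.mul_left S3)
    simpa [mul_assoc, SemiconjBy, Commute] using h2.symm

/-- `g i` commutes with `Xrec j` when `j + 1 ≤ i`. -/
lemma g_Xrec_comm : ∀ (j : ℕ) (hj : j < n) (i : ℕ) (hi : i + 1 < n), j + 1 ≤ i →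
    Commute (g K r n q i hi) (Xrec K r n q j hj) := by
  intro j
  induction j with
  | zero =>
    intro hj i hi hij
    exact g_X1_rel i hi hij
  | succ j ih =>
    intro hj i hi hij
    show Commute (g K r n q i hi)
      (g K r n q j (by omega) * Xrec K r n q j (by omega) * g K r n q j (by omega))
    have h1 : Commute (g K r n q i hi) (g K r n q j (by omega)) :=
      gg_rel hi (by omega) (Or.inr (by omega))
    have h2 : Commute (g K r n q i hi) (Xrec K r n q j (by omega)) :=
      ih (by omega) i hi (by omega)
    exact (h1.mul_right h2).mul_right h1

/-- Abstract braid computation in a monoid. -/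
lemma braid_aux {Mo : Type*} [Monoid Mo] (G H X : Mo) (hHX : H * X = X * H)
    (hbr : G * H * G = H * G * H) (hIH : G * X * G * X = X * G * X * G) :
    H * (G * X * G) * H * (G * X * G) = G * X * G * H * (G * X * G) * H := by
  have br' : ∀ y, G * (H * (G * y)) = H * (G * (H * y)) := fun y => by
    rw [← mul_assoc, ← mul_assoc, hbr, mul_assoc, mul_assoc]
  have hx' : ∀ y, H * (X * y) = X * (H * y) := fun y => by
    rw [← mul_assoc, hHX, mul_assoc]
  have xh' : ∀ y, X * (H * y) = H * (X * y) := fun y => (hx' y).symm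
  have ih' : ∀ y, G * (X * (G * (X * y))) = X * (G * (X * (G * y))) := fun y => by
    rw [← mul_assoc, ← mul_assoc, ← mul_assoc, hIH, mul_assoc, mul_assoc, mul_assoc]
  have hbr2 : G * (H * G) = H * (G * H) := by
    rw [← mul_assoc, hbr, mul_assoc]
  simp only [mul_assoc]
  -- LHS : H G X G H G X G ; RHS : G X G H G X G H
  conv_lhs => rw [br', hx', xh', ← br', ih']
  conv_rhs => rw [br', hx', xh', ← hbr2]

/-- `g_k X_k g_k X_k = X_k g_k X_k g_k`, i.e. `X_k` and `X_{k+1}` commute. -/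
lemma gXgX_comm : ∀ (k : ℕ) (hk : k + 1 < n),
    g K r n q k hk * Xrec K r n q k (by omega) * g K r n q k hk * Xrec K r n q k (by omega)
      = Xrec K r n q k (by omega) * g K r n q k hk * Xrec K r n q k (by omega) * g K r n q k hk := by
  intro k
  induction k with
  | zero => intro hk; exact gXgX_rel hk
  | succ k ih =>
    intro hk
    have hXrec : Xrec K r n q (k + 1) (by omega)
        = g K r n q k (by omega) * Xrec K r n q k (by omega) * g K r n q k (by omega) := rfl
    rw [hXrec]
    exact braid_aux (g K r n q k (by omega)) (g K r n q (k + 1) hk) (Xrec K r n q k (by omega))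
      (g_Xrec_comm k (by omega) (k + 1) hk (by omega))
      (braid_rel hk) (ih (by omega))

lemma e_eq (i : ℕ) (hi : i + 1 < n) :
    e K r n q i hi = (r : K)⁻¹ • ∑ s ∈ Finset.range r,
      t K r n q ⟨i, by omega⟩ ^ s * t K r n q ⟨i + 1, hi⟩ ^ ((r - s) % r) := by
  simp [e, eF, mkY, t, tF, map_smul, map_sum, map_mul, map_pow]

lemma sub_mod_invol {s : ℕ} (hr : 0 < r) (hs : s < r) : (r - (r - s) % r) % r = s := by
  rcases Nat.eq_zero_or_pos s with rfl | hpos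
  · simp [Nat.mod_self]
  · rw [Nat.mod_eq_of_lt (show r - s < r by omega), show r - (r - s) = s by omega,
      Nat.mod_eq_of_lt hs]

/-- `e_i` commutes with `g_i`. -/
lemma e_g_comm (i : ℕ) (hi : i + 1 < n) :
    g K r n q i hi * e K r n q i hi = e K r n q i hi * g K r n q i hi := by
  rcases Nat.eq_zero_or_pos r with rfl | hr
  · simp [e_eq]
  have sa : SemiconjBy (g K r n q i hi) (t K r n q ⟨i, by omega⟩)
      (t K r n q ⟨i + 1, hi⟩) := by
    have := g_t_rel (q := q) (r := r) i hi ⟨i, by omega⟩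
    rwa [show swapi n i hi ⟨i, by omega⟩ = ⟨i + 1, hi⟩ from Equiv.swap_apply_left _ _] at this
  have sb : SemiconjBy (g K r n q i hi) (t K r n q ⟨i + 1, hi⟩)
      (t K r n q ⟨i, by omega⟩) := by
    have := g_t_rel (q := q) (r := r) i hi ⟨i + 1, hi⟩
    rwa [show swapi n i hi ⟨i + 1, hi⟩ = ⟨i, by omega⟩ from Equiv.swap_apply_right _ _] at this
  rw [e_eq]
  rw [mul_smul_comm, smul_mul_assoc]
  congr 1
  rw [Finset.mul_sum, Finset.sum_mul]
  have step : ∀ s ∈ Finset.range r,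
      g K r n q i hi * (t K r n q ⟨i, by omega⟩ ^ s * t K r n q ⟨i + 1, hi⟩ ^ ((r - s) % r))
        = (t K r n q ⟨i + 1, hi⟩ ^ s * t K r n q ⟨i, by omega⟩ ^ ((r - s) % r))
            * g K r n q i hi := by
    intro s _
    exact ((sa.pow_right s).mul_right (sb.pow_right _))
  rw [Finset.sum_congr rfl step, ← Finset.sum_mul]
  rw [← Finset.sum_mul]
  congr 1
  refine Finset.sum_nbij' (i := fun s => (r - s) % r) (j := fun s => (r - s) % r) ?_ ?_ ?_ ?_ ?_
  · intro a ha; exact Finset.mem_range.mpr (Nat.mod_lt _ hr)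
  · intro a ha; exact Finset.mem_range.mpr (Nat.mod_lt _ hr)
  · intro a ha; exact sub_mod_invol hr (Finset.mem_range.mp ha)
  · intro a ha; exact sub_mod_invol hr (Finset.mem_range.mp ha)
  · intro a ha
    rw [sub_mod_invol hr (Finset.mem_range.mp ha)]
    have hc : Commute (t K r n q ⟨i + 1, hi⟩) (t K r n q ⟨i, by omega⟩) := t_t_rel _ _
    exact (hc.pow_pow _ _)

lemma e_Xrec_comm (i : ℕ) (hi : i + 1 < n) (m : ℕ) (hm : m < n) :
    Commute (e K r n q i hi) (Xrec K r n q m hm) := by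
  rw [e_eq]
  refine Commute.smul_left ?_ _
  refine Commute.sum_left _ _ _ (fun s _ => ?_)
  exact Commute.mul_left (((t_Xrec_comm m hm _)).pow_left _) ((t_Xrec_comm m hm _).pow_left _)

lemma t_pow_mod (j : Fin n) (m : ℕ) (hm : m ≤ r) :
    t K r n q j ^ (m % r) = t K r n q j ^ m := by
  rcases Nat.eq_zero_or_pos r with rfl | hr
  · simp at hm; simp [hm]
  rcases eq_or_lt_of_le hm with rfl | hlt
  · rw [Nat.mod_self, pow_zero, t_pow_r]
  · rw [Nat.mod_eq_of_lt hlt]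

lemma e_sq (hrK : (r : K) ≠ 0) (i : ℕ) (hi : i + 1 < n) :
    e K r n q i hi * e K r n q i hi = e K r n q i hi := by
  have hr : 0 < r := Nat.pos_of_ne_zero (fun h => hrK (by simp [h]))
  set ta := t K r n q ⟨i, by omega⟩ with hta
  set tb := t K r n q ⟨i + 1, hi⟩ with htb
  set P : ℕ → Y K r n q := fun s => ta ^ s * tb ^ (r - s) with hP
  have he : e K r n q i hi = (r : K)⁻¹ • ∑ s ∈ Finset.range r, P s := by
    rw [e_eq]
    congr 1
    refine Finset.sum_congr rfl (fun s hs => ?_)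
    rw [hP]
    congr 1
    exact t_pow_mod _ _ (by omega)
  have hc : Commute tb ta := t_t_rel _ _
  have Pmul : ∀ s ∈ Finset.range r, ∀ s' ∈ Finset.range r,
      P s * P s' = P ((s + s') % r) := by
    intro s hs s' hs'
    rw [Finset.mem_range] at hs hs'
    have h1 : P s * P s' = ta ^ (s + s') * tb ^ (r - s + (r - s')) := by
      rw [hP]
      simp only
      rw [(hc.pow_pow (r - s) s').mul_mul_mul_comm, ← pow_add, ← pow_add]
    by_cases hlt : s + s' < r
    · rw [h1, Nat.mod_eq_of_lt hlt, hP]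
      simp only
      congr 1
      rw [show r - s + (r - s') = r - (s + s') + r by omega, pow_add, t_pow_r, mul_one]
    · have h2 : (s + s') % r = s + s' - r := by
        rw [Nat.mod_eq_sub_mod (by omega), Nat.mod_eq_of_lt (by omega)]
      have e1 : ta ^ (s + s') = ta ^ (s + s' - r) := by
        conv_lhs => rw [show s + s' = (s + s' - r) + r by omega]
        rw [pow_add, t_pow_r, mul_one]
      rw [h1, h2, hP]
      simp only
      rw [e1, show r - s + (r - s') = r - (s + s' - r) by omega]
  have hSS : (∑ s ∈ Finset.range r, P s) * (∑ s ∈ Finset.range r, P s)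
      = r • ∑ s ∈ Finset.range r, P s := by
    rw [Finset.sum_mul_sum]
    have hinner : ∀ s ∈ Finset.range r,
        ∑ s' ∈ Finset.range r, P s * P s' = ∑ m ∈ Finset.range r, P m := by
      intro s hs
      have hs' := Finset.mem_range.mp hs
      rw [Finset.sum_congr rfl (fun s' hs'' => Pmul s hs s' hs'')]
      refine Finset.sum_nbij' (i := fun s' => (s + s') % r)
        (j := fun m => (m + (r - s)) % r) ?_ ?_ ?_ ?_ ?_
      · intro a _; exact Finset.mem_range.mpr (Nat.mod_lt _ hr)
      · intro a _; exact Finset.mem_range.mpr (Nat.mod_lt _ hr)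
      · intro a ha
        show ((s + a) % r + (r - s)) % r = a
        rw [Nat.mod_add_mod, show s + a + (r - s) = a + r by omega, Nat.add_mod_right,
          Nat.mod_eq_of_lt (Finset.mem_range.mp ha)]
      · intro a ha
        show (s + (a + (r - s)) % r) % r = a
        rw [Nat.add_mod_mod, show s + (a + (r - s)) = a + r by omega, Nat.add_mod_right,
          Nat.mod_eq_of_lt (Finset.mem_range.mp ha)]
      · intro a _; rfl
    rw [Finset.sum_congr rfl hinner, Finset.sum_const, Finset.card_range]
  rw [he, smul_mul_assoc, mul_smul_comm, hSS, ← Nat.cast_smul_eq_nsmul K r, smul_smul,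
    smul_smul]
  congr 1
  field_simp

section Step

variable {K : Type} [Field K] [IsAlgClosed K] {r n : ℕ} {q : K}

lemma Xrec_comm_pair (k : ℕ) (hk : k + 1 < n) :
    Xrec K r n q k (by omega) * Xrec K r n q (k + 1) hk
      = Xrec K r n q (k + 1) hk * Xrec K r n q k (by omega) := by
  have hD := gXgX_comm (K := K) (r := r) (n := n) (q := q) k hk
  show Xrec K r n q k (by omega) *
      (g K r n q k hk * Xrec K r n q k (by omega) * g K r n q k hk)
    = (g K r n q k hk * Xrec K r n q k (by omega) * g K r n q k hk) *
      Xrec K r n q k (by omega)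
  simp only [mul_assoc] at hD ⊢
  exact hD.symm

/-- The adjacent-step equivalence: eigenvalues of `X_k` all lie in `qᶻ` iff those
of `X_{k+1}` do. -/
lemma adj_step (hrK : (r : K) ≠ 0) (hq : q ≠ 0)
    (M : Type) [AddCommGroup M] [Module K M] [Module (Y K r n q) M]
    [IsScalarTower K (Y K r n q) M] [FiniteDimensional K M]
    (k : ℕ) (hk : k + 1 < n) :
    (∀ a : K, Module.End.HasEigenvalue
        (actHom K (Y K r n q) M (Xrec K r n q k (by omega))) a → ∃ m : ℤ, a = q ^ m) ↔
    (∀ a : K, Module.End.HasEigenvalue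
        (actHom K (Y K r n q) M (Xrec K r n q (k + 1) hk)) a → ∃ m : ℤ, a = q ^ m) := by
  set ρ := actHom K (Y K r n q) M with hρ
  set A := ρ (Xrec K r n q k (by omega)) with hA
  set B := ρ (Xrec K r n q (k + 1) hk) with hB
  set E := ρ (e K r n q k hk) with hE
  set G := ρ (g K r n q k hk) with hG
  set d : K := q - q⁻¹ with hd
  have hAB : A * B = B * A := by
    rw [hA, hB, ← map_mul, ← map_mul, Xrec_comm_pair k hk]
  have hEA : E * A = A * E := by
    rw [hE, hA, ← map_mul, ← map_mul, (e_Xrec_comm k hk k (by omega)).eq]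
  have hEB : E * B = B * E := by
    rw [hE, hB, ← map_mul, ← map_mul, (e_Xrec_comm k hk (k + 1) hk).eq]
  have hEG : E * G = G * E := by
    rw [hE, hG, ← map_mul, ← map_mul, ← e_g_comm k hk]
  have hGAG : G * A * G = B := by
    rw [hG, hA, ← map_mul, ← map_mul]
    rfl
  have hG2 : G * G = 1 + d • (E * G) := by
    rw [hG, hE, ← map_mul, ← map_mul, ← map_smul, g_sq k hk, map_add, map_one, map_smul,
      map_mul]
  have hE2 : E * E = E := by
    rw [hE, ← map_mul, e_sq hrK k hk]
  -- inverse of G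
  have hGinvG : (G - d • E) * G = 1 := by
    rw [sub_mul, smul_mul_assoc, hG2, hEG, add_sub_cancel_right]
  have hGGinv : G * (G - d • E) = 1 := by
    rw [mul_sub, mul_smul_comm, hG2, ← hEG, add_sub_cancel_right]
  have hGAG' : (G - d • E) * B * (G - d • E) = A := by
    have h1 : (G - d • E) * B = A * G := by
      rw [← hGAG, ← mul_assoc, ← mul_assoc, hGinvG, one_mul]
    rw [h1, mul_assoc, hGGinv, mul_one]
  have hEG' : E * (G - d • E) = (G - d • E) * E := by
    rw [mul_sub, sub_mul, hEG, mul_smul_comm, smul_mul_assoc, hE2]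
  have hG2' : (G - d • E) * (G - d • E) = 1 + (q⁻¹ - (q⁻¹)⁻¹) • (E * (G - d • E)) := by
    rw [inv_inv, mul_sub, sub_mul, sub_mul, hG2, mul_smul_comm, smul_mul_assoc,
      smul_mul_assoc, mul_smul_comm, hE2, ← hEG, mul_sub, mul_smul_comm, hE2, smul_sub]
    match_scalars
    · ring
    · rw [hd]; field_simp; ring
    · rw [hd]; field_simp; ring
  constructor
  · intro hP a ha
    obtain ⟨b, hbEig, m, hm⟩ := keyStep q hq A B E G hAB hEA hEB hEG hGAG
      (by rw [← hd]; exact hG2) hE2 a ha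
    obtain ⟨m2, hm2⟩ := hP b hbEig
    exact ⟨m2 + m, by rw [hm, hm2, zpow_add₀ hq]⟩
  · intro hP a ha
    obtain ⟨b, hbEig, m, hm⟩ := keyStep q⁻¹ (inv_ne_zero hq) B A E (G - d • E)
      hAB.symm hEB hEA hEG' hGAG' hG2' hE2 a ha
    obtain ⟨m2, hm2⟩ := hP b hbEig
    refine ⟨m2 - m, ?_⟩
    rw [hm, hm2, inv_zpow, ← zpow_neg, ← zpow_add₀ hq]
    ring_nf

end Step

end Identities
end YH

/-- Lemma 5.2 of the paper: if for some fixed `i` all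
eigenvalues of `X_i` on a finite-dimensional `Ŷ_{r,n}^K`-module `M` lie in
`I = {qᵐ : m ∈ ℤ}`, then `M` is integral, i.e. all eigenvalues of every `X_k`
on `M` lie in `I`. -/
theorem statement16 (K : Type) [Field K] [IsAlgClosed K] (r n : ℕ) (hr : 0 < r) (hn : 0 < n)
    (hrK : (r : K) ≠ 0) (q : K) (hq : q ≠ 0)
    (M : Type) [AddCommGroup M] [Module K M] [Module (YH.Y K r n q) M]
    [IsScalarTower K (YH.Y K r n q) M] [FiniteDimensional K M]
    (i : Fin n)
    (h : ∀ a : K,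
      Module.End.HasEigenvalue
        (YH.actHom K (YH.Y K r n q) M (YH.X K r n q i)) a → ∃ m : ℤ, a = q ^ m) :
    ∀ (k : Fin n) (a : K),
      Module.End.HasEigenvalue
        (YH.actHom K (YH.Y K r n q) M (YH.X K r n q k)) a → ∃ m : ℤ, a = q ^ m := by
  have hi2 : i.1 < n := i.2
  let P : ℕ → Prop := fun m => ∀ (hm : m < n), ∀ a : K,
    Module.End.HasEigenvalue
      (YH.actHom K (YH.Y K r n q) M (YH.Xrec K r n q m hm)) a → ∃ mm : ℤ, a = q ^ mm
  have hPi : P i.1 := fun hm a ha => h a ha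
  have hstep : ∀ m : ℕ, m + 1 < n → (P m ↔ P (m + 1)) := by
    intro m hm1
    constructor
    · intro hPm hm a
      exact (YH.adj_step hrK hq M m hm1).mp (fun a' => hPm (by omega) a') a
    · intro hPm hm a
      exact (YH.adj_step hrK hq M m hm1).mpr (fun a' => hPm (by omega) a') a
  have hup : ∀ dj : ℕ, i.1 + dj < n → P (i.1 + dj) := by
    intro dj
    induction dj with
    | zero => intro _; exact hPi
    | succ dj ih =>
      intro hlt
      exact (hstep (i.1 + dj) (by omega)).mp (ih (by omega))
  have hdown : ∀ dj : ℕ, dj ≤ i.1 → P (i.1 - dj) := by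
    intro dj
    induction dj with
    | zero => intro _; exact hPi
    | succ dj ih =>
      intro hle
      have h1 : (i.1 - (dj + 1)) + 1 = i.1 - dj := by omega
      refine (hstep (i.1 - (dj + 1)) (by omega)).mpr ?_
      rw [h1]
      exact ih (by omega)
  intro k a hEig
  have hk2 : k.1 < n := k.2
  rcases le_or_gt i.1 k.1 with hle | hlt
  · have hP := hup (k.1 - i.1) (by omega)
    rw [show i.1 + (k.1 - i.1) = k.1 by omega] at hP
    exact hP k.2 a hEig
  · have hP := hdown (i.1 - k.1) (by omega)
    rw [show i.1 - (i.1 - k.1) = k.1 by omega] at hP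
    exact hP k.2 a hEig
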